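/- Let {|b_{ti}⟩ : i=1,…,d}, t=1,…,d+1, be a complete family of d+1 mutually unbiased orthonormal bases of ℂ^d, i.e., each {|b_{ti}⟩}_i is an orthonormal basis and |⟨b_{ti}|b_{sj}⟩|² = 1/d whenever t≠s. Then Σ_{t=1}^{d+1} Σ_{i=1}^{d} |b_{ti}⟩⟨b_{ti}| ⊗ |b_{ti}⟩⟨b_{ti}| = 1⊗1 + F, where F is the swap operator on ℂ^d⊗ℂ^d and 1 is the identity on ℂ^d. -/

import Mathlib

open Matrix Kronecker

-- aux 1: trace-zero implies zero
lemma auxTraceZero {n : Type*} [Fintype n] (N : Matrix n n ℂ)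
    (h : Matrix.trace (Nᴴ * N) = 0) : N = 0 := by
  have h1 : ((∑ j, ∑ i, Complex.normSq (N i j) : ℝ) : ℂ) = 0 := by
    rw [← h]
    push_cast
    simp [Matrix.trace, Matrix.diag, Matrix.mul_apply, Matrix.conjTranspose_apply,
      Complex.mul_conj, mul_comm]
  have h2 : (∑ j, ∑ i, Complex.normSq (N i j) : ℝ) = 0 := by exact_mod_cast h1
  ext i j
  have h3 : ∀ j ∈ Finset.univ, (0:ℝ) ≤ ∑ i, Complex.normSq (N i j) :=
    fun j _ => Finset.sum_nonneg fun i _ => Complex.normSq_nonneg _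
  have h4 := (Finset.sum_eq_zero_iff_of_nonneg h3).mp h2 j (Finset.mem_univ j)
  have h5 := (Finset.sum_eq_zero_iff_of_nonneg
    (fun i _ => Complex.normSq_nonneg (N i j))).mp h4 i (Finset.mem_univ i)
  simpa using Complex.normSq_eq_zero.mp h5

-- aux 2: trace of product of rank-one projectors
lemma auxTraceVMV {n : Type*} [Fintype n] (u v : n → ℂ) :
    Matrix.trace (Matrix.vecMulVec u (star u) * Matrix.vecMulVec v (star v))
      = (star u ⬝ᵥ v) * (star v ⬝ᵥ u) := by
  simp only [Matrix.trace, Matrix.diag, Matrix.mul_apply, Matrix.vecMulVec_apply,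
    dotProduct, Finset.sum_mul, Finset.mul_sum, Pi.star_apply]
  exact Finset.sum_congr rfl fun a _ => Finset.sum_congr rfl fun c _ => by ring

lemma auxSwapTrace {d : ℕ} (F : Matrix (Fin d × Fin d) (Fin d × Fin d) ℂ)
    (hFe : ∀ p q, F p q = if p.1 = q.2 ∧ p.2 = q.1 then 1 else 0)
    (X Y : Matrix (Fin d) (Fin d) ℂ) :
    Matrix.trace ((X ⊗ₖ Y) * F) = Matrix.trace (X * Y) := by
  simp only [Matrix.trace, Matrix.diag, Matrix.mul_apply, hFe, Matrix.kroneckerMap_apply]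
  rw [Fintype.sum_prod_type]
  simp [Fintype.sum_prod_type, ite_and, mul_ite, Finset.sum_ite_eq', Finset.sum_ite_eq]

lemma auxFF {d : ℕ} (F : Matrix (Fin d × Fin d) (Fin d × Fin d) ℂ)
    (hFe : ∀ p q, F p q = if p.1 = q.2 ∧ p.2 = q.1 then 1 else 0) : F * F = 1 := by
  ext p q
  simp only [Matrix.mul_apply, hFe, Fintype.sum_prod_type, ite_and, mul_ite, mul_one, mul_zero,
    ite_mul, zero_mul, one_mul]
  simp only [Finset.sum_ite_eq', Finset.sum_ite_eq, Finset.mem_univ, if_true,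
    Matrix.one_apply, Prod.ext_iff]
  split_ifs <;> simp_all

lemma auxTraceF {d : ℕ} (F : Matrix (Fin d × Fin d) (Fin d × Fin d) ℂ)
    (hFe : ∀ p q, F p q = if p.1 = q.2 ∧ p.2 = q.1 then 1 else 0) :
    Matrix.trace F = (d : ℂ) := by
  rw [Matrix.trace]
  simp only [Matrix.diag, hFe]
  rw [Fintype.sum_prod_type]
  simp [eq_comm, Finset.sum_ite_eq]

lemma auxFH {d : ℕ} (F : Matrix (Fin d × Fin d) (Fin d × Fin d) ℂ)
    (hFe : ∀ p q, F p q = if p.1 = q.2 ∧ p.2 = q.1 then 1 else 0) : Fᴴ = F := by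
  ext p q
  rw [Matrix.conjTranspose_apply, hFe, hFe]
  have h : (q.1 = p.2 ∧ q.2 = p.1) ↔ (p.1 = q.2 ∧ p.2 = q.1) := by
    constructor <;> rintro ⟨a, c⟩ <;> exact ⟨c.symm, a.symm⟩
  simp only [apply_ite (star : ℂ → ℂ), star_one, star_zero, h]



open Matrix Kronecker in
/-- For a complete family of `d+1` mutually unbiased orthonormal bases
`{|b_{ti}⟩}` of `ℂ^d`,
`Σ_{t=1}^{d+1} Σ_{i=1}^{d} |b_{ti}⟩⟨b_{ti}| ⊗ |b_{ti}⟩⟨b_{ti}| = 1⊗1 + F`,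
where `F` is the swap operator on `ℂ^d ⊗ ℂ^d`. -/
theorem stmt13 (d : ℕ) (hd : 0 < d)
    (b : Fin (d + 1) → Fin d → Fin d → ℂ)
    (hob : ∀ t i j, star (b t i) ⬝ᵥ b t j = if i = j then 1 else 0)
    (hmub : ∀ t s, t ≠ s → ∀ i j, ‖star (b t i) ⬝ᵥ b s j‖ ^ 2 = 1 / d)
    (F : Matrix (Fin d × Fin d) (Fin d × Fin d) ℂ)
    (hF : ∀ ψ φ : Fin d → ℂ,
      F.mulVec (fun q => ψ q.1 * φ q.2) = fun q => φ q.1 * ψ q.2) :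
    ∑ t, ∑ i, (vecMulVec (b t i) (star (b t i)) ⊗ₖ vecMulVec (b t i) (star (b t i)))
      = 1 + F := by
  classical
  set P : Fin (d + 1) → Fin d → Matrix (Fin d) (Fin d) ℂ :=
    fun t i => vecMulVec (b t i) (star (b t i)) with hP
  set A : Matrix (Fin d × Fin d) (Fin d × Fin d) ℂ := ∑ t, ∑ i, (P t i ⊗ₖ P t i) with hA
  have hd0 : (d : ℂ) ≠ 0 := Nat.cast_ne_zero.mpr hd.ne'
  -- explicit entries of F
  have hFe : ∀ p q : Fin d × Fin d, F p q = if p.1 = q.2 ∧ p.2 = q.1 then 1 else 0 := by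
    intro p q
    have h1 := congrFun (hF (Pi.single q.1 1) (Pi.single q.2 1)) p
    simp only [Matrix.mulVec, dotProduct, Pi.single_apply, Fintype.sum_prod_type,
      mul_ite, mul_one, mul_zero, ite_mul, one_mul, zero_mul, Finset.sum_ite_eq,
      Finset.sum_ite_eq', Finset.mem_univ, if_true] at h1
    rw [show ((q.1, q.2) : Fin d × Fin d) = q from rfl] at h1
    rw [h1]
    by_cases e1 : p.1 = q.2 <;> by_cases e2 : p.2 = q.1 <;> simp [e1, e2]
  -- Hermiticity
  have hBH : (1 + F)ᴴ = 1 + F := by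
    rw [Matrix.conjTranspose_add, Matrix.conjTranspose_one, auxFH F hFe]
  have hAH : Aᴴ = A := by
    rw [hA]
    ext p q
    simp only [Matrix.conjTranspose_apply, Matrix.sum_apply, Matrix.kroneckerMap_apply,
      Matrix.vecMulVec_apply, Pi.star_apply, star_sum, star_mul', star_star, hP]
    exact Finset.sum_congr rfl fun t _ => Finset.sum_congr rfl fun i _ => by ring
  -- the key overlap computation
  have hconj : ∀ (u v : Fin d → ℂ), star v ⬝ᵥ u = star (star u ⬝ᵥ v) := by
    intro u v
    simp [dotProduct, star_sum, star_mul', mul_comm]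
  have hkey : ∀ t i s j, (star (b t i) ⬝ᵥ b s j) * (star (b s j) ⬝ᵥ b t i)
      = if t = s then (if i = j then 1 else 0) else 1 / (d : ℂ) := by
    intro t i s j
    by_cases h : t = s
    · subst h
      rw [hob, hob, if_pos rfl]
      rcases eq_or_ne i j with rfl | hij
      · simp
      · simp [hij, Ne.symm hij]
    · rw [if_neg h]
      have h4 : star (b s j) ⬝ᵥ b t i = star (star (b t i) ⬝ᵥ b s j) := hconj _ _
      rw [h4, show (star (star (b t i) ⬝ᵥ b s j) : ℂ)
          = (starRingEnd ℂ) (star (b t i) ⬝ᵥ b s j) from rfl, Complex.mul_conj,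
        Complex.normSq_eq_norm_sq, hmub t s h i j]
      push_cast
      ring
  -- traces
  have hP1 : ∀ t i, Matrix.trace (P t i) = 1 := by
    intro t i
    rw [hP]
    simp only [Matrix.trace, Matrix.diag, Matrix.vecMulVec_apply, Pi.star_apply]
    have h := hob t i i
    rw [if_pos rfl] at h
    rw [← h]
    simp [dotProduct, mul_comm]
  have hTA : Matrix.trace A = ((d : ℂ) + 1) * d := by
    rw [hA]
    simp only [Matrix.trace_sum, Matrix.trace_kronecker, hP1, mul_one]
    simp [Finset.card_univ]
  have hAF : Matrix.trace (A * F) = ((d : ℂ) + 1) * d := by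
    rw [hA]
    simp only [Finset.sum_mul, Matrix.trace_sum, auxSwapTrace F hFe, hP, auxTraceVMV, hkey]
    simp [Finset.card_univ]
  have T1 : Matrix.trace (A * A) = 2 * (d : ℂ) * ((d : ℂ) + 1) := by
    rw [hA]
    simp only [Finset.sum_mul, Finset.mul_sum, Matrix.trace_sum, ← Matrix.mul_kronecker_mul,
      Matrix.trace_kronecker, hP, auxTraceVMV, hkey]
    have inner : ∀ (t : Fin (d + 1)) (i : Fin d),
        (∑ s, ∑ j, ((if s = t then (if j = i then (1:ℂ) else 0) else 1 / (d : ℂ)) *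
          (if s = t then (if j = i then (1:ℂ) else 0) else 1 / (d : ℂ)))) = 2 := by
      intro t i
      rw [← Finset.add_sum_erase _ _ (Finset.mem_univ t)]
      have e1 : (∑ j, ((if t = t then (if j = i then (1:ℂ) else 0) else 1 / (d : ℂ)) *
          (if t = t then (if j = i then (1:ℂ) else 0) else 1 / (d : ℂ)))) = 1 := by
        simp [ite_mul, mul_ite, Finset.sum_ite_eq]
      rw [e1]
      have e2 : ∀ s ∈ Finset.univ.erase t,
          (∑ j, ((if s = t then (if j = i then (1:ℂ) else 0) else 1 / (d : ℂ)) *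
            (if s = t then (if j = i then (1:ℂ) else 0) else 1 / (d : ℂ))))
            = (d : ℂ) * (1 / (d : ℂ) * (1 / (d : ℂ))) := by
        intro s hs
        have hts : s ≠ t := Finset.ne_of_mem_erase hs
        simp [if_neg hts, Finset.sum_const, Finset.card_univ, nsmul_eq_mul]
      rw [Finset.sum_congr rfl e2, Finset.sum_const,
        Finset.card_erase_of_mem (Finset.mem_univ t)]
      simp only [Finset.card_univ, Fintype.card_fin, Nat.add_sub_cancel, nsmul_eq_mul]
      field_simp
      ring
    simp only [inner]
    simp [Finset.card_univ]
    ring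
  -- assemble
  have t2 : Matrix.trace (A * (1 + F)) = 2 * (d : ℂ) * ((d : ℂ) + 1) := by
    rw [mul_add, mul_one, Matrix.trace_add, hTA, hAF]; ring
  have t3 : Matrix.trace ((1 + F) * A) = 2 * (d : ℂ) * ((d : ℂ) + 1) := by
    rw [add_mul, one_mul, Matrix.trace_add, hTA, Matrix.trace_mul_comm F A, hAF]; ring
  have t4 : Matrix.trace ((1 + F) * (1 + F)) = 2 * (d : ℂ) * ((d : ℂ) + 1) := by
    rw [add_mul, one_mul, mul_add, mul_one, auxFF F hFe, Matrix.trace_add, Matrix.trace_add,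
      Matrix.trace_add, Matrix.trace_one, auxTraceF F hFe]
    simp only [Fintype.card_prod, Fintype.card_fin]
    push_cast
    ring
  have hz : Matrix.trace ((A - (1 + F))ᴴ * (A - (1 + F))) = 0 := by
    rw [Matrix.conjTranspose_sub, hAH, hBH, Matrix.sub_mul, Matrix.mul_sub, Matrix.mul_sub,
      Matrix.trace_sub, Matrix.trace_sub, Matrix.trace_sub, T1, t2, t3, t4]
    ring
  exact sub_eq_zero.mp (auxTraceZero _ hz)
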